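/- Let τ be a Cartan involution of a finite-dimensional real Lie algebra g with Cartan decomposition g = m ⊕ h, and let p be a nonzero h-submodule of m. Then [p, p] ≠ {0}, and p ⊕ [p, p] is an ideal of g. -/

import Mathlib

/-- For a Cartan involution τ with decomposition g = m ⊕ h and a nonzero
h-submodule p of m, one has [p,p] ≠ 0 and p ⊕ [p,p] is an ideal of g. -/
theorem stmt_14 (g : Type*) [LieRing g] [LieAlgebra ℝ g] [FiniteDimensional ℝ g]
    (τ : g →ₗ[ℝ] g)
    (hbr : ∀ x y : g, τ ⁅x, y⁆ = ⁅τ x, τ y⁆)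
    (hinvol : ∀ x : g, τ (τ x) = x)
    (hpos : ∀ x : g, x ≠ 0 → 0 < -(killingForm ℝ g x (τ x)))
    (p : Submodule ℝ g)
    (hpm : ∀ x ∈ p, τ x = -x)
    (hstab : ∀ a : g, τ a = a → ∀ x ∈ p, ⁅a, x⁆ ∈ p)
    (hpne : p ≠ ⊥) :
    (∃ u ∈ p, ∃ v ∈ p, ⁅u, v⁆ ≠ (0 : g)) ∧
    (∀ x y : g, y ∈ p ⊔ Submodule.span ℝ {z : g | ∃ u ∈ p, ∃ v ∈ p, z = ⁅u, v⁆} →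
      ⁅x, y⁆ ∈ p ⊔ Submodule.span ℝ {z : g | ∃ u ∈ p, ∃ v ∈ p, z = ⁅u, v⁆}) := by
  classical
  set κ := killingForm ℝ g with hκdef
  set S := {z : g | ∃ u ∈ p, ∃ v ∈ p, z = ⁅u, v⁆} with hSdef
  set W := Submodule.span ℝ S with hWdef
  -- τ as a Lie algebra equivalence
  let e : g ≃ₗ⁅ℝ⁆ g :=
    { toFun := τ, map_add' := τ.map_add, map_smul' := τ.map_smul,
      map_lie' := by intro x y; exact hbr x y,
      invFun := τ, left_inv := hinvol, right_inv := hinvol }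
  have hinv : ∀ x y : g, κ (τ x) (τ y) = κ x y := fun x y =>
    LieAlgebra.killingForm_of_equiv_apply e x y
  have hcomm : ∀ x y : g, κ x y = κ y x := fun x y =>
    LieModule.traceForm_comm ℝ g g x y
  have hlie : ∀ x y z : g, κ ⁅x, y⁆ z = κ x ⁅y, z⁆ := fun x y z =>
    LieModule.traceForm_apply_lie_apply ℝ g g x y z
  have hsymmτ : ∀ x y : g, κ x (τ y) = κ (τ x) y := by
    intro x y
    have := hinv x (τ y)
    rw [hinvol] at this
    exact this.symm
  -- the positive definite form B
  set B : LinearMap.BilinForm ℝ g := -((killingForm ℝ g).compl₂ τ) with hBdef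
  have hB : ∀ x y : g, B x y = -(κ x (τ y)) := by
    intro x y; simp [hBdef, LinearMap.compl₂_apply, hκdef]
  have hBsymm : ∀ x y : g, B x y = B y x := by
    intro x y; rw [hB, hB, hsymmτ, hcomm]
  have hBrefl : B.IsRefl := fun x y h => by rw [hBsymm]; exact h
  have hBpos : ∀ x : g, x ≠ 0 → 0 < B x x := fun x hx => by rw [hB]; exact hpos x hx
  have hBzero : ∀ x : g, B x x = 0 → x = 0 := by
    intro x h
    by_contra hx
    exact absurd h (ne_of_gt (hBpos x hx)).symm.symm
  -- τ fixes W
  have hWfix : ∀ w ∈ W, τ w = w := by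
    intro w hw
    induction hw using Submodule.span_induction with
    | mem z hz =>
      obtain ⟨u, hu, v, hv, rfl⟩ := hz
      rw [hbr, hpm u hu, hpm v hv, neg_lie, lie_neg, neg_neg]
    | zero => simp
    | add x y _ _ hx hy => rw [map_add, hx, hy]
    | smul c x _ hx => rw [map_smul, hx]
  -- brackets of W with p land in p
  have hWp : ∀ w ∈ W, ∀ x ∈ p, ⁅w, x⁆ ∈ p := by
    intro w hw x hx
    exact hstab w (hWfix w hw) x hx
  -- h-stability of W
  have hWstab : ∀ a : g, τ a = a → ∀ w ∈ W, ⁅a, w⁆ ∈ W := by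
    intro a ha w hw
    induction hw using Submodule.span_induction with
    | mem z hz =>
      obtain ⟨u, hu, v, hv, rfl⟩ := hz
      rw [leibniz_lie]
      refine add_mem (Submodule.subset_span ?_) (Submodule.subset_span ?_)
      · exact ⟨⁅a, u⁆, hstab a ha u hu, v, hv, rfl⟩
      · exact ⟨u, hu, ⁅a, v⁆, hstab a ha v hv, rfl⟩
    | zero => simp
    | add x y _ _ hx hy => rw [lie_add]; exact add_mem hx hy
    | smul c x _ hx => rw [lie_smul]; exact Submodule.smul_mem _ _ hx
  -- key lemma: [b, u] ∈ W for τ b = -b, u ∈ p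
  have hkey : ∀ b : g, τ b = -b → ∀ u ∈ p, ⁅b, u⁆ ∈ W := by
    intro b hb u hu
    have hnd : (B.restrict W).Nondegenerate := by
      refine ⟨?_, ?_⟩
      all_goals
        intro ⟨x, hx⟩ h
        have := h ⟨x, hx⟩
        simp only [LinearMap.BilinForm.restrict_apply] at this
        exact Subtype.ext (hBzero x this)
    have hcompl : IsCompl W (B.orthogonal W) :=
      LinearMap.BilinForm.isCompl_orthogonal_of_restrict_nondegenerate hBrefl hnd
    have htop : ⁅b, u⁆ ∈ W ⊔ B.orthogonal W := by
      rw [hcompl.sup_eq_top]; trivial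
    obtain ⟨w, hw, c, hc, hwc⟩ := Submodule.mem_sup.mp htop
    -- τ fixes [b, u] hence also c
    have hbu : τ ⁅b, u⁆ = ⁅b, u⁆ := by
      rw [hbr, hb, hpm u hu, neg_lie, lie_neg, neg_neg]
    have hcfix : τ c = c := by
      have : c = ⁅b, u⁆ - w := by rw [← hwc]; abel
      rw [this, map_sub, hbu, hWfix w hw]
    -- κ c w' = 0 for w' ∈ W
    have hκcW : ∀ w' ∈ W, κ c w' = 0 := by
      intro w' hw'
      have h0 : B w' c = 0 := hc w' hw'
      rw [hB, hcfix] at h0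
      rw [hcomm]; linarith
    -- [c, u'] = 0 for u' ∈ p
    have hcu : ∀ u' ∈ p, ⁅c, u'⁆ = (0 : g) := by
      intro u' hu'
      have hy : ⁅c, u'⁆ ∈ p := hstab c hcfix u' hu'
      have hκy : ∀ v' ∈ p, κ ⁅c, u'⁆ v' = 0 := by
        intro v' hv'
        rw [hlie]
        exact hκcW _ (Submodule.subset_span ⟨u', hu', v', hv', rfl⟩)
      have hByy : B ⁅c, u'⁆ ⁅c, u'⁆ = 0 := by
        rw [hB, hpm _ hy, map_neg, neg_neg]
        exact hκy _ hy
      exact hBzero _ hByy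
    -- conclude c = 0
    have hκcc : κ c c = 0 := by
      have h1 : κ ⁅b, u⁆ c = 0 := by
        rw [hlie]
        have huc : ⁅u, c⁆ = (0 : g) := by
          have h' : ⁅u, c⁆ = -⁅c, u⁆ := by rw [lie_skew]
          rw [h', hcu u hu, neg_zero]
        rw [huc, map_zero]
      have h2 : κ c w = 0 := hκcW w hw
      have : κ c ⁅b, u⁆ = 0 := by rw [hcomm]; exact h1
      calc κ c c = κ c (⁅b, u⁆ - w) := by
            congr 1
            rw [← hwc]; abel
        _ = κ c ⁅b, u⁆ - κ c w := by rw [map_sub]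
        _ = 0 := by rw [this, h2, sub_zero]
    have hc0 : c = 0 := by
      apply hBzero
      rw [hB, hcfix, hκcc, neg_zero]
    rw [← hwc, hc0, add_zero]
    exact hw
  -- brackets of m-part with W land in p
  have hkey2 : ∀ b : g, τ b = -b → ∀ w ∈ W, ⁅b, w⁆ ∈ p := by
    intro b hb w hw
    induction hw using Submodule.span_induction with
    | mem z hz =>
      obtain ⟨u, hu, v, hv, rfl⟩ := hz
      rw [leibniz_lie]
      refine add_mem (hWp _ (hkey b hb u hu) v hv) ?_
      have h' : ⁅u, ⁅b, v⁆⁆ = -⁅⁅b, v⁆, u⁆ := by rw [lie_skew]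
      rw [h']
      exact neg_mem (hWp _ (hkey b hb v hv) u hu)
    | zero => simp
    | add x y _ _ hx hy => rw [lie_add]; exact add_mem hx hy
    | smul c x _ hx => rw [lie_smul]; exact Submodule.smul_mem _ _ hx
  constructor
  · -- part 1
    by_contra hz
    push_neg at hz
    have hW0 : W = ⊥ := by
      rw [hWdef, Submodule.span_eq_bot]
      rintro z ⟨u, hu, v, hv, rfl⟩
      exact hz u hu v hv
    obtain ⟨u, hu, hu0⟩ := (Submodule.ne_bot_iff p).mp hpne
    have had : ∀ x : g, ⁅u, ⁅u, x⁆⁆ = (0 : g) := by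
      intro x
      have hax : τ ((1/2 : ℝ) • (x + τ x)) = (1/2 : ℝ) • (x + τ x) := by
        rw [map_smul, map_add, hinvol, add_comm]
      have hbx : τ ((1/2 : ℝ) • (x - τ x)) = -((1/2 : ℝ) • (x - τ x)) := by
        rw [map_smul, map_sub, hinvol, ← smul_neg, neg_sub]
      have hxdecomp : x = (1/2 : ℝ) • (x + τ x) + (1/2 : ℝ) • (x - τ x) := by
        rw [← smul_add]
        have : x + τ x + (x - τ x) = (2 : ℝ) • x := by
          rw [two_smul]; abel
        rw [this, smul_smul]; norm_num
      have h1 : ⁅u, (1/2 : ℝ) • (x + τ x)⁆ ∈ p := by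
        have h' : ⁅u, (1/2 : ℝ) • (x + τ x)⁆ = -⁅(1/2 : ℝ) • (x + τ x), u⁆ := by
          rw [lie_skew]
        rw [h']
        exact neg_mem (hstab _ hax u hu)
      have h2 : ⁅u, (1/2 : ℝ) • (x - τ x)⁆ = (0 : g) := by
        have h0 := hkey _ hbx u hu
        rw [hW0, Submodule.mem_bot] at h0
        have h' : ⁅u, (1/2 : ℝ) • (x - τ x)⁆ = -⁅(1/2 : ℝ) • (x - τ x), u⁆ := by
          rw [lie_skew]
        rw [h', h0, neg_zero]
      have hux : ⁅u, x⁆ ∈ p := by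
        have hd : ⁅u, x⁆ = ⁅u, (1/2 : ℝ) • (x + τ x)⁆ + ⁅u, (1/2 : ℝ) • (x - τ x)⁆ := by
          rw [← lie_add, ← hxdecomp]
        rw [hd, h2, add_zero]
        exact h1
      exact hz u hu _ hux
    have hκuu : κ u u = 0 := by
      have h0 : LieAlgebra.ad ℝ g u ∘ₗ LieAlgebra.ad ℝ g u = 0 := by
        ext x
        simp [had x]
      rw [hκdef, killingForm_apply_apply, h0, map_zero]
    have := hpos u hu0
    rw [hpm u hu, map_neg, hκuu] at this
    simp at this
  · -- part 2: ideal property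
    intro x y hy
    obtain ⟨y₁, hy₁, y₂, hy₂, rfl⟩ := Submodule.mem_sup.mp hy
    have hax : τ ((1/2 : ℝ) • (x + τ x)) = (1/2 : ℝ) • (x + τ x) := by
      rw [map_smul, map_add, hinvol, add_comm]
    have hbx : τ ((1/2 : ℝ) • (x - τ x)) = -((1/2 : ℝ) • (x - τ x)) := by
      rw [map_smul, map_sub, hinvol, ← smul_neg, neg_sub]
    have hxdecomp : x = (1/2 : ℝ) • (x + τ x) + (1/2 : ℝ) • (x - τ x) := by
      rw [← smul_add]
      have : x + τ x + (x - τ x) = (2 : ℝ) • x := by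
        rw [two_smul]; abel
      rw [this, smul_smul]; norm_num
    set a := (1/2 : ℝ) • (x + τ x)
    set b := (1/2 : ℝ) • (x - τ x)
    have hsplit : ⁅x, y₁ + y₂⁆ = (⁅a, y₁⁆ + ⁅b, y₂⁆) + (⁅b, y₁⁆ + ⁅a, y₂⁆) := by
      have hd : ⁅x, y₁ + y₂⁆ = ⁅a + b, y₁ + y₂⁆ := by rw [← hxdecomp]
      rw [hd, add_lie, lie_add, lie_add]
      abel
    rw [hsplit]
    refine add_mem (Submodule.mem_sup_left ?_) (Submodule.mem_sup_right ?_)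
    · exact add_mem (hstab a hax y₁ hy₁) (hkey2 b hbx y₂ hy₂)
    · exact add_mem (hkey b hbx y₁ hy₁) (hWstab a hax y₂ hy₂)
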